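/- Let K be self-adjoint with spectrum in ℕ + λ (λ > 0), A a bounded operator, A(τ) := e^{iτK} A e^{−iτK}, and ⟨A⟩ := (1/2π) ∫₀^{2π} A(τ) dτ. Then Y := (1/2π) ∫₀^{2π} τ (A − ⟨A⟩)(τ) dτ solves the homological equation i[K, Y] = A − ⟨A⟩. Moreover, if A is symmetric then so is Y. -/

import Mathlib

open Real intervalIntegral
set_option maxHeartbeats 1000000

/-- `Y := (1/2π) ∫₀^{2π} τ · U(τ)(A−⟨A⟩)U(−τ) dτ` solves the homological
equation `i[K, Y] = A − ⟨A⟩`, where `i[K,Y]` is interpreted as the derivative at `τ = 0`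
of `τ ↦ U(τ) Y U(−τ)`; moreover `Y` is symmetric if `A` is. -/
theorem homological_equation_solution
    {E : Type*} [NormedAddCommGroup E] [InnerProductSpace ℂ E] [CompleteSpace E]
    (U : ℝ → E →L[ℂ] E) (A : E →L[ℂ] E)
    (hU0 : U 0 = 1)
    (hgroup : ∀ σ τ : ℝ, U (σ + τ) = U σ * U τ)
    (hadj : ∀ τ : ℝ, ContinuousLinearMap.adjoint (U τ) = U (-τ))
    (hcont : Continuous U)
    (hper : ∀ (B : E →L[ℂ] E) (τ : ℝ),
      U (τ + 2 * π) * B * U (-(τ + 2 * π)) = U τ * B * U (-τ))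
    (avg Y : E →L[ℂ] E)
    (havg : avg = (1 / (2 * π) : ℝ) • ∫ σ in (0:ℝ)..(2 * π), U σ * A * U (-σ))
    (hY : Y = (1 / (2 * π) : ℝ) •
      ∫ σ in (0:ℝ)..(2 * π), σ • (U σ * (A - avg) * U (-σ))) :
    HasDerivAt (fun τ => U τ * Y * U (-τ)) (A - avg) 0 ∧
      (IsSelfAdjoint A → IsSelfAdjoint Y) := by
  have hπ : (2 * π : ℝ) ≠ 0 := by positivity
  set B := A - avg with hB
  set F : (E →L[ℂ] E) → ℝ → (E →L[ℂ] E) := fun C s => U s * C * U (-s) with hF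
  have hFcont : ∀ C, Continuous (F C) := fun C =>
    (hcont.mul continuous_const).mul (hcont.comp continuous_neg)
  have hFper : ∀ C, Function.Periodic (F C) (2 * π) := fun C s => hper C s
  have hshift : ∀ (C : E →L[ℂ] E) (t : ℝ),
      (∫ s in t..t + 2 * π, F C s) = ∫ s in (0:ℝ)..2 * π, F C s := fun C t => by
    simpa using (hFper C).intervalIntegral_add_eq t 0
  -- conjugation commutes with interval integrals
  have hconjint : ∀ (f : ℝ → E →L[ℂ] E) (a b τ : ℝ),
      IntervalIntegrable f MeasureTheory.volume a b →
      U τ * (∫ s in a..b, f s) * U (-τ) = ∫ s in a..b, U τ * f s * U (-τ) := by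
    intro f a b τ hf
    have h := ((ContinuousLinearMap.mul ℂ (E →L[ℂ] E) (U τ)).comp
        ((ContinuousLinearMap.mul ℂ (E →L[ℂ] E)).flip (U (-τ)))).intervalIntegral_comp_comm hf
    simpa [ContinuousLinearMap.mul_apply', ContinuousLinearMap.flip_apply,
      mul_assoc] using h.symm
  have hmove : ∀ (C : E →L[ℂ] E) (τ s : ℝ), U τ * F C s * U (-τ) = F C (τ + s) := by
    intro C τ s
    have h1 : U (τ + s) = U τ * U s := hgroup τ s
    have h2 : U (-(τ + s)) = U (-s) * U (-τ) := by
      rw [show -(τ + s) = -s + -τ by ring, hgroup]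
    simp only [hF, h1, h2, mul_assoc]
  have hIA : (∫ s in (0:ℝ)..2 * π, F A s) = (2 * π : ℝ) • avg := by
    rw [havg, smul_smul, mul_one_div, div_self hπ, one_smul]
  -- invariance of the average
  have hinv : ∀ τ : ℝ, U τ * avg * U (-τ) = avg := by
    intro τ
    conv_lhs => rw [havg]
    rw [mul_smul_comm, smul_mul_assoc,
      hconjint _ _ _ _ ((hFcont A).intervalIntegrable _ _)]
    have : (∫ s in (0:ℝ)..2 * π, U τ * F A s * U (-τ))
        = ∫ s in (0:ℝ)..2 * π, F A (τ + s) := by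
      congr 1; funext s; exact hmove A τ s
    rw [this, intervalIntegral.integral_comp_add_left (F A) τ, add_zero, hshift, havg]
  have hC0 : (∫ s in (0:ℝ)..2 * π, F B s) = 0 := by
    have hFB : ∀ s : ℝ, F B s = F A s - avg := by
      intro s
      simp only [hF, hB, mul_sub, sub_mul]
      rw [hinv s]
    rw [intervalIntegral.integral_congr (fun s _ => hFB s),
      intervalIntegral.integral_sub ((hFcont A).intervalIntegrable _ _)
        intervalIntegrable_const,
      hIA, intervalIntegral.integral_const, sub_zero, sub_self]
  have hsFcont : Continuous (fun s : ℝ => s • F B s) := continuous_id.smul (hFcont B)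
  set G : ℝ → E →L[ℂ] E := fun t => ∫ s in (0:ℝ)..t, s • F B s with hG
  have hGderiv : ∀ t : ℝ, HasDerivAt G (t • F B t) t := fun t =>
    (hsFcont.integral_hasStrictDerivAt 0 t).hasDerivAt
  -- the conjugated Y
  have hg : ∀ τ : ℝ, U τ * Y * U (-τ) = (1 / (2 * π) : ℝ) • (G (τ + 2 * π) - G τ) := by
    intro τ
    rw [hY, show (∫ σ in (0:ℝ)..2 * π, σ • (U σ * B * U (-σ)))
        = ∫ σ in (0:ℝ)..2 * π, σ • F B σ from rfl,
      mul_smul_comm, smul_mul_assoc,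
      hconjint _ _ _ _ (hsFcont.intervalIntegrable _ _)]
    congr 1
    have e1 : (∫ s in (0:ℝ)..2 * π, U τ * (s • F B s) * U (-τ))
        = ∫ s in (0:ℝ)..2 * π, (fun u => (u - τ) • F B u) (τ + s) := by
      congr 1; funext s
      simp only [mul_smul_comm, smul_mul_assoc, hmove B τ s, add_sub_cancel_left]
    rw [e1,
      intervalIntegral.integral_comp_add_left (fun u => (u - τ) • F B u) τ, add_zero]
    have e2 : (∫ u in τ..τ + 2 * π, (u - τ) • F B u)
        = (∫ u in τ..τ + 2 * π, u • F B u) - τ • ∫ u in τ..τ + 2 * π, F B u := by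
      rw [← intervalIntegral.integral_smul,
        ← intervalIntegral.integral_sub (g := fun u => τ • F B u) (hsFcont.intervalIntegrable _ _)
          (((hFcont B).const_smul τ).intervalIntegrable _ _)]
      congr 1; funext u; rw [sub_smul]
    rw [e2, hshift, hC0, smul_zero, sub_zero, hG]
    rw [← intervalIntegral.integral_interval_sub_left
      (hsFcont.intervalIntegrable _ _) (hsFcont.intervalIntegrable _ _)]
  have hFB0 : F B (2 * π) = B := by
    have := hper B 0
    rw [zero_add, hU0, neg_zero] at this
    simpa [hF, hU0] using this
  have hderiv : HasDerivAt (fun τ => (1 / (2 * π) : ℝ) • (G (τ + 2 * π) - G τ)) B 0 := by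
    have h1 : HasDerivAt (fun τ : ℝ => G (τ + 2 * π)) ((2 * π) • F B (2 * π)) 0 :=
      HasDerivAt.comp_add_const 0 (2 * π) (by simpa using hGderiv (0 + 2 * π))
    have h2 := (h1.sub (hGderiv 0)).const_smul ((1 / (2 * π)) : ℝ)
    rw [zero_smul, sub_zero, hFB0, smul_smul, one_div_mul_cancel hπ, one_smul] at h2
    exact h2
  constructor
  · exact hderiv.congr_of_eventuallyEq (Filter.Eventually.of_forall fun τ => hg τ)
  · intro hA
    have hstarU : ∀ τ : ℝ, star (U τ) = U (-τ) := fun τ =>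
      (ContinuousLinearMap.star_eq_adjoint (U τ)).trans (hadj τ)
    have hstar_int : ∀ (f : ℝ → E →L[ℂ] E) (a b : ℝ),
        IntervalIntegrable f MeasureTheory.volume a b →
        star (∫ s in a..b, f s) = ∫ s in a..b, star (f s) := by
      intro f a b hf
      exact (((starL' ℝ : (E →L[ℂ] E) ≃L[ℝ] (E →L[ℂ] E)).toContinuousLinearMap
        ).intervalIntegral_comp_comm hf).symm
    have hstarF : ∀ (C : E →L[ℂ] E), star C = C → ∀ s : ℝ, star (F C s) = F C s := by
      intro C hCsa s
      simp only [hF, star_mul, hstarU, hCsa, neg_neg, mul_assoc]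
    have havgSA : star avg = avg := by
      conv_lhs => rw [havg]
      rw [star_smul, star_trivial,
        hstar_int _ _ _ ((hFcont A).intervalIntegrable _ _)]
      have : (∫ s in (0:ℝ)..2 * π, star (F A s)) = ∫ s in (0:ℝ)..2 * π, F A s := by
        congr 1; funext s; exact hstarF A hA.star_eq s
      rw [this, ← havg]
    have hBSA : star B = B := by
      rw [hB, star_sub, hA.star_eq, havgSA]
    show star Y = Y
    conv_lhs => rw [hY]
    rw [show (∫ σ in (0:ℝ)..2 * π, σ • (U σ * B * U (-σ)))
        = ∫ σ in (0:ℝ)..2 * π, σ • F B σ from rfl,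
      star_smul, star_trivial,
      hstar_int _ _ _ (hsFcont.intervalIntegrable _ _)]
    have e3 : (∫ s in (0:ℝ)..2 * π, star (s • F B s)) = ∫ s in (0:ℝ)..2 * π, s • F B s := by
      congr 1; funext s
      rw [star_smul, star_trivial, hstarF B hBSA s]
    rw [e3, ← show (∫ σ in (0:ℝ)..2 * π, σ • (U σ * B * U (-σ)))
        = ∫ σ in (0:ℝ)..2 * π, σ • F B σ from rfl, ← hY]
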